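/- Let A ∈ ℝ^{n×m}, b ∈ ℝ^n, g ∈ ℝ^m, ρ ≥ 0, and define Δ̂ = (ρω/√(‖g‖²+1))·[gᵀ −1] where ω = (Ag−b)/‖Ag−b‖ if Ag ≠ b and ω is any unit-norm vector otherwise. Then ‖Δ̂‖_F = ρ and ‖(A+Δ̂_A)g − (b+Δ̂_b)‖ = ‖Ag−b‖ + ρ√(‖g‖²+1), where [Δ̂_A Δ̂_b] = Δ̂. -/

import Mathlib

open Matrix BigOperators

noncomputable def vnorm {n : ℕ} (x : Fin n → ℝ) : ℝ := Real.sqrt (∑ i, x i ^ 2)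

lemma vnorm_nonneg {n : ℕ} (x : Fin n → ℝ) : 0 ≤ vnorm x := Real.sqrt_nonneg _

lemma vnorm_sq {n : ℕ} (x : Fin n → ℝ) : vnorm x ^ 2 = ∑ i, x i ^ 2 :=
  Real.sq_sqrt (Finset.sum_nonneg fun i _ => sq_nonneg _)

lemma vnorm_smul {n : ℕ} (c : ℝ) (x : Fin n → ℝ) : vnorm (c • x) = |c| * vnorm x := by
  unfold vnorm
  rw [← Real.sqrt_sq_eq_abs, ← Real.sqrt_mul (sq_nonneg c), Finset.mul_sum]
  congr 1
  exact Finset.sum_congr rfl fun i _ => by simp [mul_pow]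

lemma vnorm_pos {n : ℕ} {x : Fin n → ℝ} (hx : x ≠ 0) : 0 < vnorm x := by
  apply Real.sqrt_pos.2
  obtain ⟨i, hi⟩ : ∃ i, x i ≠ 0 := by
    by_contra h; push_neg at h; exact hx (funext h)
  exact Finset.sum_pos' (fun j _ => sq_nonneg _) ⟨i, Finset.mem_univ i, by positivity⟩

/-- The rank-one perturbation Δ̂ = (ρω/√(‖g‖²+1))[gᵀ −1] has Frobenius norm ρ and attains
the worst case ‖Ag−b‖ + ρ√(‖g‖²+1). -/
theorem stmt2 {n m : ℕ} (A : Matrix (Fin n) (Fin m) ℝ) (b : Fin n → ℝ) (g : Fin m → ℝ)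
    (ρ : ℝ) (hρ : 0 ≤ ρ) (ω : Fin n → ℝ) (hω : vnorm ω = 1)
    (hωdef : A.mulVec g ≠ b → ω = (vnorm (A.mulVec g - b))⁻¹ • (A.mulVec g - b)) :
    let s : ℝ := ρ / Real.sqrt (vnorm g ^ 2 + 1)
    let ΔA : Matrix (Fin n) (Fin m) ℝ := fun i j => s * ω i * g j
    let Δb : Fin n → ℝ := fun i => -(s * ω i)
    Real.sqrt ((∑ i, ∑ j, ΔA i j ^ 2) + ∑ i, Δb i ^ 2) = ρ ∧
    vnorm ((A + ΔA).mulVec g - (b + Δb)) =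
      vnorm (A.mulVec g - b) + ρ * Real.sqrt (vnorm g ^ 2 + 1) := by
  intro s ΔA Δb
  have hg1 : (0:ℝ) < vnorm g ^ 2 + 1 := by positivity
  have hsqrt : Real.sqrt (vnorm g ^ 2 + 1) ^ 2 = vnorm g ^ 2 + 1 := Real.sq_sqrt hg1.le
  have hsqrtpos : 0 < Real.sqrt (vnorm g ^ 2 + 1) := Real.sqrt_pos.2 hg1
  have hωsq : ∑ i, ω i ^ 2 = 1 := by rw [← vnorm_sq, hω]; norm_num
  have hgsq : ∑ j, g j ^ 2 = vnorm g ^ 2 := (vnorm_sq g).symm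
  have hs2 : s ^ 2 * (vnorm g ^ 2 + 1) = ρ ^ 2 := by
    show (ρ / Real.sqrt (vnorm g ^ 2 + 1)) ^ 2 * _ = _
    rw [div_pow, hsqrt]
    field_simp
  have hsnn : 0 ≤ s := div_nonneg hρ hsqrtpos.le
  constructor
  · have : (∑ i, ∑ j, ΔA i j ^ 2) + ∑ i, Δb i ^ 2 = ρ ^ 2 := by
      have h1 : ∀ i, ∑ j, ΔA i j ^ 2 = s ^ 2 * ω i ^ 2 * vnorm g ^ 2 := by
        intro i
        simp only [ΔA, mul_pow]
        rw [← Finset.mul_sum, hgsq]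
      have h2 : ∀ i, Δb i ^ 2 = s ^ 2 * ω i ^ 2 := by
        intro i; simp [Δb, mul_pow]
      simp only [h1, h2]
      rw [← Finset.sum_mul]
      have hsum : ∑ i, s ^ 2 * ω i ^ 2 = s ^ 2 := by
        rw [← Finset.mul_sum, hωsq, mul_one]
      rw [hsum, ← hs2]; ring
    rw [this, Real.sqrt_sq hρ]
  · set r := A.mulVec g - b with hr
    set t : ℝ := s * (vnorm g ^ 2 + 1) with ht
    have htval : t = ρ * Real.sqrt (vnorm g ^ 2 + 1) := by
      show ρ / Real.sqrt (vnorm g ^ 2 + 1) * (vnorm g ^ 2 + 1) = _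
      rw [div_mul_eq_mul_div, eq_comm, eq_div_iff hsqrtpos.ne', mul_assoc,
        Real.mul_self_sqrt hg1.le]
    have htnn : 0 ≤ t := mul_nonneg hsnn hg1.le
    have hv : (A + ΔA).mulVec g - (b + Δb) = r + t • ω := by
      funext i
      simp only [Matrix.add_mulVec, Matrix.mulVec, dotProduct, Pi.add_apply,
        Pi.sub_apply, Pi.smul_apply, smul_eq_mul, hr, ΔA, Δb]
      have : ∑ j, s * ω i * g j * g j = s * ω i * vnorm g ^ 2 := by
        rw [← hgsq, Finset.mul_sum]; congr 1; ext j; ring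
      have e : ∑ x, (A + ΔA) i x * g x = ∑ x, A i x * g x + ∑ j, s * ω i * g j * g j := by
        rw [← Finset.sum_add_distrib]
        exact Finset.sum_congr rfl fun j _ => by rw [Matrix.add_apply]; simp only [ΔA]; ring
      show ∑ x, (A + ΔA) i x * g x - (b i + -(s * ω i)) = _
      rw [e]
      rw [this]; ring
    rw [hv]
    by_cases hrz : A.mulVec g = b
    · have : r = 0 := by rw [hr, hrz, sub_self]
      have h0 : vnorm (0 : Fin n → ℝ) = 0 := by simp [vnorm]
      rw [this, zero_add, vnorm_smul, hω, abs_of_nonneg htnn, h0, zero_add, htval,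
        mul_one]
    · have hωe := hωdef hrz
      have hrne : r ≠ 0 := fun h => hrz (by rwa [hr, sub_eq_zero] at h)
      have hrpos : 0 < vnorm r := vnorm_pos hrne
      have : r + t • ω = (1 + t * (vnorm r)⁻¹) • r := by
        rw [hωe, smul_smul, add_smul, one_smul]
      rw [this, vnorm_smul, abs_of_nonneg (by positivity), ← htval]
      field_simp
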